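/- Let f : M → ℝ be C² on a strongly convex neighborhood S of a point x̄ with ∇f(x̄) = 0, and suppose the eigenvalues of the Hessian of f on S lie in [h, H] with 0 < h ≤ H. Then for every x ∈ S: (a) h·d(x, x̄) ≤ ‖∇f(x)‖ ≤ H·d(x, x̄); (b) (h/2)·d²(x, x̄) ≤ f(x) − f(x̄) ≤ (H/2)·d²(x, x̄); and (c) h·(1 + h/H)·(f(x) − f(x̄)) ≤ ‖∇f(x)‖². -/

import Mathlib

open Real Set

section Aux
variable {E : Type*} [NormedAddCommGroup E] [InnerProductSpace ℝ E] [CompleteSpace E]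

local notation "⟪" x ", " y "⟫" => @inner ℝ _ _ x y

lemma my_inner_gradient (f : E → ℝ) (z v : E) : ⟪gradient f z, v⟫ = fderiv ℝ f z v :=
  InnerProductSpace.toDual_symm_apply

lemma my_bilin_abs (B : E →L[ℝ] E →L[ℝ] ℝ) (h H : ℝ) (hh : 0 ≤ h)
    (hdiag : ∀ u : E, h * ‖u‖ ^ 2 ≤ B u u ∧ B u u ≤ H * ‖u‖ ^ 2)
    (hsymm : ∀ u w : E, B u w = B w u) (u w : E) :
    |B u w| ≤ H * (‖u‖ * ‖w‖) := by
  have unit : ∀ a b : E, ‖a‖ = 1 → ‖b‖ = 1 → B a b ≤ H := by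
    intro a b ha hb
    have e1 : B (a + b) (a + b) = B a a + 2 * B a b + B b b := by
      simp only [map_add, ContinuousLinearMap.add_apply]
      rw [hsymm b a]; ring
    have e2 : B (a - b) (a - b) = B a a - 2 * B a b + B b b := by
      simp only [map_sub, ContinuousLinearMap.sub_apply]
      rw [hsymm b a]; ring
    have h1 := (hdiag (a + b)).2
    have h2 := (hdiag (a - b)).1
    have hn1 : ‖a + b‖ ≤ 2 := by
      calc ‖a + b‖ ≤ ‖a‖ + ‖b‖ := norm_add_le a b
      _ = 2 := by rw [ha, hb]; norm_num
    have hn1' : ‖a + b‖ ^ 2 ≤ 4 := by nlinarith [norm_nonneg (a + b)]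
    have hH0 : 0 ≤ H := by
      have := (hdiag a).1.trans (hdiag a).2
      rw [ha] at this; nlinarith
    nlinarith [mul_nonneg hh (sq_nonneg ‖a - b‖), mul_le_mul_of_nonneg_left hn1' hH0]
  have unit' : ∀ a b : E, ‖a‖ = 1 → ‖b‖ = 1 → |B a b| ≤ H := by
    intro a b ha hb
    rw [abs_le]
    refine ⟨?_, unit a b ha hb⟩
    have := unit a (-b) ha (by rwa [norm_neg])
    rw [map_neg] at this; linarith
  rcases eq_or_ne u 0 with rfl | hu
  · simp
  rcases eq_or_ne w 0 with rfl | hw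
  · simp
  have hu0 : (0:ℝ) < ‖u‖ := norm_pos_iff.mpr hu
  have hw0 : (0:ℝ) < ‖w‖ := norm_pos_iff.mpr hw
  have key : B u w = ‖u‖ * ‖w‖ * B (‖u‖⁻¹ • u) (‖w‖⁻¹ • w) := by
    simp only [map_smul, ContinuousLinearMap.smul_apply, smul_eq_mul]
    field_simp
  rw [key, abs_mul, abs_of_nonneg (by positivity : (0:ℝ) ≤ ‖u‖ * ‖w‖)]
  have := unit' (‖u‖⁻¹ • u) (‖w‖⁻¹ • w) (norm_smul_inv_norm hu) (norm_smul_inv_norm hw)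
  calc ‖u‖ * ‖w‖ * |B (‖u‖⁻¹ • u) (‖w‖⁻¹ • w)| ≤ ‖u‖ * ‖w‖ * H :=
        mul_le_mul_of_nonneg_left this (by positivity)
  _ = H * (‖u‖ * ‖w‖) := by ring

lemma my_key (f : E → ℝ) (S : Set E) (hconv : Convex ℝ S) (hopen : IsOpen S)
    (h H : ℝ) (hh : 0 ≤ h)
    (hf : ContDiffOn ℝ 2 f S)
    (hHess : ∀ x ∈ S, ∀ v : E,
      h * ‖v‖ ^ 2 ≤ iteratedFDeriv ℝ 2 f x ![v, v] ∧
      iteratedFDeriv ℝ 2 f x ![v, v] ≤ H * ‖v‖ ^ 2)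
    (x : E) (hx : x ∈ S) (y : E) (hy : y ∈ S) :
    (h / 2 * ‖y - x‖ ^ 2 ≤ f y - f x - fderiv ℝ f x (y - x)) ∧
    (f y - f x - fderiv ℝ f x (y - x) ≤ H / 2 * ‖y - x‖ ^ 2) ∧
    ‖gradient f y - gradient f x‖ ≤ H * ‖y - x‖ := by
  have hdf : ∀ z ∈ S, DifferentiableAt ℝ f z := fun z hz =>
    ((hf.differentiableOn (by norm_num)) z hz).differentiableAt (hopen.mem_nhds hz)
  have hff : ContDiffOn ℝ 1 (fderiv ℝ f) S := hf.fderiv_of_isOpen hopen (by norm_num)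
  have hdf' : ∀ z ∈ S, DifferentiableAt ℝ (fderiv ℝ f) z := fun z hz =>
    ((hff.differentiableOn (by norm_num)) z hz).differentiableAt (hopen.mem_nhds hz)
  have hdiag : ∀ z ∈ S, ∀ u : E,
      h * ‖u‖ ^ 2 ≤ fderiv ℝ (fderiv ℝ f) z u u ∧
      fderiv ℝ (fderiv ℝ f) z u u ≤ H * ‖u‖ ^ 2 := by
    intro z hz u
    have := hHess z hz u
    rwa [iteratedFDeriv_two_apply] at this
  have hsymm : ∀ z ∈ S, ∀ u w : E,
      fderiv ℝ (fderiv ℝ f) z u w = fderiv ℝ (fderiv ℝ f) z w u := fun z hz =>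
    (hf.contDiffAt (hopen.mem_nhds hz)).isSymmSndFDerivAt (by simp)
  have habs : ∀ z ∈ S, ∀ u w : E,
      |fderiv ℝ (fderiv ℝ f) z u w| ≤ H * (‖u‖ * ‖w‖) := fun z hz =>
    my_bilin_abs _ h H hh (hdiag z hz) (hsymm z hz)
  set v := y - x with hvdef
  set γ : ℝ → E := fun t => x + t • v with hγdef
  have hγS : ∀ t ∈ Icc (0:ℝ) 1, γ t ∈ S := fun t ht => hconv.add_smul_sub_mem hx hy ht
  have hγ0 : γ 0 = x := by simp [hγdef]
  have hγ1 : γ 1 = y := by simp [hγdef, hvdef]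
  have hγd : ∀ s : ℝ, HasDerivAt γ v s := fun s => by
    exact (((hasDerivAt_id s).smul_const v).const_add x).congr_deriv (one_smul ℝ v)
  have hψd : ∀ t ∈ Icc (0:ℝ) 1, HasDerivAt (fun s => f (γ s)) (fderiv ℝ f (γ t) v) t :=
    fun t ht => (hdf _ (hγS t ht)).hasFDerivAt.comp_hasDerivAt t (hγd t)
  have hχd : ∀ u : E, ∀ t ∈ Icc (0:ℝ) 1, HasDerivAt (fun s => fderiv ℝ f (γ s) u)
      (fderiv ℝ (fderiv ℝ f) (γ t) v u) t := by
    intro u t ht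
    have h1 : HasDerivAt (fun s => fderiv ℝ f (γ s)) (fderiv ℝ (fderiv ℝ f) (γ t) v) t :=
      (hdf' _ (hγS t ht)).hasFDerivAt.comp_hasDerivAt t (hγd t)
    simpa using h1.clm_apply (hasDerivAt_const t u)
  -- step 1 : bounds for t ↦ fderiv f (γ t) v on [0,1]
  have hχc : ∀ u : E, ContinuousOn (fun s => fderiv ℝ f (γ s) u) (Icc 0 1) :=
    fun u t ht => ((hχd u t ht).continuousAt).continuousWithinAt
  have hχdiff : ∀ u : E, DifferentiableOn ℝ (fun s => fderiv ℝ f (γ s) u)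
      (interior (Icc (0:ℝ) 1)) := by
    intro u
    rw [interior_Icc]
    exact fun t ht =>
      ((hχd u t (Ioo_subset_Icc_self ht)).differentiableAt).differentiableWithinAt
  have step1lo : ∀ t ∈ Icc (0:ℝ) 1,
      h * ‖v‖ ^ 2 * t ≤ fderiv ℝ f (γ t) v - fderiv ℝ f x v := by
    intro t ht
    have := (convex_Icc (0:ℝ) 1).mul_sub_le_image_sub_of_le_deriv (hχc v) (hχdiff v)
      (C := h * ‖v‖ ^ 2) ?_ 0 (left_mem_Icc.mpr zero_le_one) t ht ht.1
    · rw [hγ0] at this; simpa using this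
    · intro s hs
      rw [interior_Icc] at hs
      rw [(hχd v s (Ioo_subset_Icc_self hs)).deriv]
      exact (hdiag _ (hγS s (Ioo_subset_Icc_self hs)) v).1
  have step1hi : ∀ t ∈ Icc (0:ℝ) 1,
      fderiv ℝ f (γ t) v - fderiv ℝ f x v ≤ H * ‖v‖ ^ 2 * t := by
    intro t ht
    have := (convex_Icc (0:ℝ) 1).image_sub_le_mul_sub_of_deriv_le (hχc v) (hχdiff v)
      (C := H * ‖v‖ ^ 2) ?_ 0 (left_mem_Icc.mpr zero_le_one) t ht ht.1
    · rw [hγ0] at this; simpa using this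
    · intro s hs
      rw [interior_Icc] at hs
      rw [(hχd v s (Ioo_subset_Icc_self hs)).deriv]
      exact (hdiag _ (hγS s (Ioo_subset_Icc_self hs)) v).2
  -- step 2 : lower Taylor bound
  have taylor_lo : h / 2 * ‖v‖ ^ 2 ≤ f y - f x - fderiv ℝ f x v := by
    set Φ : ℝ → ℝ := fun t => f (γ t) - t * fderiv ℝ f x v - h / 2 * t ^ 2 * ‖v‖ ^ 2 with hΦ
    have hΦd : ∀ t ∈ Icc (0:ℝ) 1, HasDerivAt Φ
        (fderiv ℝ f (γ t) v - fderiv ℝ f x v - h * ‖v‖ ^ 2 * t) t := by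
      intro t ht
      have p1 : HasDerivAt (fun s : ℝ => s * fderiv ℝ f x v) (fderiv ℝ f x v) t := by
        simpa using (hasDerivAt_id t).mul_const (fderiv ℝ f x v)
      have p2 : HasDerivAt (fun s : ℝ => h / 2 * s ^ 2 * ‖v‖ ^ 2) (h * ‖v‖ ^ 2 * t) t := by
        have := ((hasDerivAt_pow 2 t).const_mul (h / 2)).mul_const (‖v‖ ^ 2)
        exact this.congr_deriv (by push_cast; ring)
      exact ((hψd t ht).sub p1).sub p2
    have := (convex_Icc (0:ℝ) 1).mul_sub_le_image_sub_of_le_deriv (C := 0)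
      (fun t ht => ((hΦd t ht).continuousAt).continuousWithinAt)
      (by rw [interior_Icc]
          exact fun t ht =>
            ((hΦd t (Ioo_subset_Icc_self ht)).differentiableAt).differentiableWithinAt)
      (by intro s hs
          rw [interior_Icc] at hs
          rw [(hΦd s (Ioo_subset_Icc_self hs)).deriv]
          have := step1lo s (Ioo_subset_Icc_self hs)
          nlinarith [this]) 0 (left_mem_Icc.mpr zero_le_one) 1
      (right_mem_Icc.mpr zero_le_one) zero_le_one
    simp only [hΦ, hγ0, hγ1] at this
    nlinarith [this]
  have taylor_hi : f y - f x - fderiv ℝ f x v ≤ H / 2 * ‖v‖ ^ 2 := by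
    set Φ : ℝ → ℝ := fun t => f (γ t) - t * fderiv ℝ f x v - H / 2 * t ^ 2 * ‖v‖ ^ 2 with hΦ
    have hΦd : ∀ t ∈ Icc (0:ℝ) 1, HasDerivAt Φ
        (fderiv ℝ f (γ t) v - fderiv ℝ f x v - H * ‖v‖ ^ 2 * t) t := by
      intro t ht
      have p1 : HasDerivAt (fun s : ℝ => s * fderiv ℝ f x v) (fderiv ℝ f x v) t := by
        simpa using (hasDerivAt_id t).mul_const (fderiv ℝ f x v)
      have p2 : HasDerivAt (fun s : ℝ => H / 2 * s ^ 2 * ‖v‖ ^ 2) (H * ‖v‖ ^ 2 * t) t := by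
        have := ((hasDerivAt_pow 2 t).const_mul (H / 2)).mul_const (‖v‖ ^ 2)
        exact this.congr_deriv (by push_cast; ring)
      exact ((hψd t ht).sub p1).sub p2
    have := (convex_Icc (0:ℝ) 1).image_sub_le_mul_sub_of_deriv_le (C := 0)
      (fun t ht => ((hΦd t ht).continuousAt).continuousWithinAt)
      (by rw [interior_Icc]
          exact fun t ht =>
            ((hΦd t (Ioo_subset_Icc_self ht)).differentiableAt).differentiableWithinAt)
      (by intro s hs
          rw [interior_Icc] at hs
          rw [(hΦd s (Ioo_subset_Icc_self hs)).deriv]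
          have := step1hi s (Ioo_subset_Icc_self hs)
          nlinarith [this]) 0 (left_mem_Icc.mpr zero_le_one) 1
      (right_mem_Icc.mpr zero_le_one) zero_le_one
    simp only [hΦ, hγ0, hγ1] at this
    nlinarith [this]
  -- step 3 : Lipschitz bound on gradients
  have lip : ‖gradient f y - gradient f x‖ ≤ H * ‖v‖ := by
    set u : E := gradient f y - gradient f x with hu
    have key := (convex_Icc (0:ℝ) 1).image_sub_le_mul_sub_of_deriv_le (C := H * (‖v‖ * ‖u‖))
      (hχc u) (hχdiff u)
      (by intro s hs
          rw [interior_Icc] at hs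
          rw [(hχd u s (Ioo_subset_Icc_self hs)).deriv]
          exact (le_abs_self _).trans (habs _ (hγS s (Ioo_subset_Icc_self hs)) v u))
      0 (left_mem_Icc.mpr zero_le_one) 1 (right_mem_Icc.mpr zero_le_one) zero_le_one
    rw [hγ0, hγ1] at key
    have e : fderiv ℝ f y u - fderiv ℝ f x u = ‖u‖ ^ 2 := by
      rw [← my_inner_gradient, ← my_inner_gradient, ← inner_sub_left, ← hu,
        real_inner_self_eq_norm_sq]
    rw [e] at key
    have hHv : 0 ≤ H * ‖v‖ := by
      rcases eq_or_ne v 0 with hv | hv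
      · simp [hv]
      · have hv0 : (0:ℝ) < ‖v‖ := norm_pos_iff.mpr hv
        have := (hdiag x hx v).1.trans (hdiag x hx v).2
        nlinarith
    rcases (norm_nonneg u).eq_or_lt with h0 | h0
    · rw [← h0]; exact hHv
    · nlinarith [key]
  exact ⟨taylor_lo, taylor_hi, lip⟩

end Aux

/-- Basic estimates near a nondegenerate minimizer. `f` is `C²` on a convex open set `S`
containing the critical point `xbar` (`∇f xbar = 0`), with Hessian eigenvalues in `[h, H]` on
`S` (`0 < h ≤ H`). Then for every `x ∈ S`:
(a) `h·d(x,xbar) ≤ ‖∇f x‖ ≤ H·d(x,xbar)`;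
(b) `(h/2)·d²(x,xbar) ≤ f x − f xbar ≤ (H/2)·d²(x,xbar)`;
(c) `h·(1 + h/H)·(f x − f xbar) ≤ ‖∇f x‖²`. -/
theorem estimates_near_minimizer {E : Type*} [NormedAddCommGroup E]
    [InnerProductSpace ℝ E] [CompleteSpace E]
    (f : E → ℝ) (S : Set E) (hconv : Convex ℝ S) (hopen : IsOpen S)
    (xbar : E) (hxbar : xbar ∈ S) (h H : ℝ) (hh : 0 < h) (hhH : h ≤ H)
    (hf : ContDiffOn ℝ 2 f S)
    (hcrit : gradient f xbar = 0)
    (hHess : ∀ x ∈ S, ∀ v : E,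
      h * ‖v‖ ^ 2 ≤ iteratedFDeriv ℝ 2 f x ![v, v] ∧
      iteratedFDeriv ℝ 2 f x ![v, v] ≤ H * ‖v‖ ^ 2) :
    ∀ x ∈ S,
      (h * dist x xbar ≤ ‖gradient f x‖ ∧ ‖gradient f x‖ ≤ H * dist x xbar) ∧
      (h / 2 * dist x xbar ^ 2 ≤ f x - f xbar ∧ f x - f xbar ≤ H / 2 * dist x xbar ^ 2) ∧
      h * (1 + h / H) * (f x - f xbar) ≤ ‖gradient f x‖ ^ 2 := by
  intro x hx
  have hH0 : (0:ℝ) < H := lt_of_lt_of_le hh hhH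
  have key1 := my_key f S hconv hopen h H hh.le hf hHess xbar hxbar x hx
  have key2 := my_key f S hconv hopen h H hh.le hf hHess x hx xbar hxbar
  have hfx0 : ∀ w : E, fderiv ℝ f xbar w = 0 := by
    intro w
    rw [← my_inner_gradient, hcrit, inner_zero_left]
  rw [dist_eq_norm]
  set G := ‖gradient f x‖ with hG
  set D := ‖x - xbar‖ with hD
  have hDrev : ‖xbar - x‖ = D := norm_sub_rev xbar x
  -- (b)
  have blo : h / 2 * D ^ 2 ≤ f x - f xbar := by
    have := key1.1
    rwa [hfx0, sub_zero] at this
  have bhi : f x - f xbar ≤ H / 2 * D ^ 2 := by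
    have := key1.2.1
    rwa [hfx0, sub_zero] at this
  -- inner product rewrite for key2
  have hinner : fderiv ℝ f x (xbar - x) = -(inner ℝ (gradient f x) (x - xbar) : ℝ) := by
    rw [← my_inner_gradient, show xbar - x = -(x - xbar) by abel, inner_neg_right]
  have key2' : f x - f xbar ≤ (inner ℝ (gradient f x) (x - xbar) : ℝ) - h / 2 * D ^ 2 := by
    have := key2.1
    rw [hinner, hDrev] at this
    linarith
  have hCS : (inner ℝ (gradient f x) (x - xbar) : ℝ) ≤ G * D :=
    real_inner_le_norm _ _
  -- (a) upper
  have ahi : G ≤ H * D := by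
    have := key1.2.2
    rwa [hcrit, sub_zero, ← hDrev, norm_sub_rev] at this
  -- (a) lower
  have inlo : h * D ^ 2 ≤ (inner ℝ (gradient f x) (x - xbar) : ℝ) := by
    nlinarith [key2', blo]
  have alo : h * D ≤ G := by
    rcases (norm_nonneg (x - xbar)).eq_or_lt with h0 | h0
    · have hdz : D = 0 := by rw [hD, ← h0]
      rw [hdz, mul_zero]; exact norm_nonneg _
    · have hd0 : (0:ℝ) < D := by rw [hD]; exact h0
      have : h * D * D ≤ G * D := by nlinarith [hCS, inlo]
      exact le_of_mul_le_mul_right this hd0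
  -- (c)
  have hfub : f x - f xbar ≤ G * D - h / 2 * D ^ 2 := by linarith
  have hG0 : 0 ≤ G := norm_nonneg _
  have hD0 : 0 ≤ D := norm_nonneg _
  have hfac : (0:ℝ) ≤ h * (1 + h / H) := by positivity
  have c1 : h * (1 + h / H) * (f x - f xbar) ≤ h * (1 + h / H) * (G * D - h / 2 * D ^ 2) :=
    mul_le_mul_of_nonneg_left hfub hfac
  have c2 : h * (1 + h / H) * (G * D - h / 2 * D ^ 2) ≤ G ^ 2 := by
    have e : h * (1 + h / H) = h * (H + h) / H := by
      field_simp
    rw [e, div_mul_eq_mul_div, div_le_iff₀ hH0]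
    have t1 : 0 ≤ h ^ 2 * ((H - h) * ((H + h) * D ^ 2)) := by
      apply mul_nonneg (sq_nonneg h)
      apply mul_nonneg (by linarith)
      exact mul_nonneg (by linarith) (sq_nonneg D)
    have expand : 4 * H * (G ^ 2 * H - h * (H + h) * (G * D - h / 2 * D ^ 2)) =
        (2 * H * G - h * (H + h) * D) ^ 2 + h ^ 2 * ((H - h) * ((H + h) * D ^ 2)) := by
      ring
    have h4 : 0 ≤ 4 * H * (G ^ 2 * H - h * (H + h) * (G * D - h / 2 * D ^ 2)) := by
      rw [expand]
      have := sq_nonneg (2 * H * G - h * (H + h) * D)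
      linarith
    have h5 : (0:ℝ) ≤ G ^ 2 * H - h * (H + h) * (G * D - h / 2 * D ^ 2) :=
      le_of_mul_le_mul_left (by linarith) (by linarith : (0:ℝ) < 4 * H)
    linarith
  exact ⟨⟨alo, ahi⟩, ⟨blo, bhi⟩, c1.trans c2⟩
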